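/- For every nonempty T ⊆ (0,∞) one has R_T ≥ inf(T* ∩ (1,∞)) (with inf ∅ = +∞). -/
import Mathlib


open Set Filter Topology Pointwise

noncomputable section

/-- `T* = T ∪ T⁻¹ ∪ {1}` -/
def Tstar (T : Set ℝ) : Set ℝ := T ∪ (fun t => t⁻¹) '' T ∪ {1}

/-- `T_{γ₋,γ₊,n}`: products of `n` elements of `T*` whose partial products stay in `[γ₋,γ₊]`. -/
def TProdN (T : Set ℝ) (γm γp : ℝ) (n : ℕ) : Set ℝ :=
  {x | ∃ t : Fin n → ℝ, (∀ i, t i ∈ Tstar T) ∧ x = ∏ i, t i ∧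
    ∀ k : Fin n, (∏ i ∈ Finset.univ.filter (· ≤ k), t i) ∈ Icc γm γp}

/-- `T_{γ₋,γ₊} = ⋃_{n ≥ 1} T_{γ₋,γ₊,n}` -/
def TProd (T : Set ℝ) (γm γp : ℝ) : Set ℝ := ⋃ n ∈ {n : ℕ | 1 ≤ n}, TProdN T γm γp n

/-- `T_{γ₋,γ₊}` is dense in `[γ₋,γ₊]`. -/
def DenseInIcc (T : Set ℝ) (γm γp : ℝ) : Prop := Icc γm γp ⊆ closure (TProd T γm γp)

/-- The limit ratio `R_T ∈ [1,∞]` (with `inf ∅ = ∞`). -/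
def limitRatio (T : Set ℝ) : ENNReal :=
  sInf {r : ENNReal | ∃ γm γp : ℝ, γm ∈ Ioo (0:ℝ) 1 ∧ 1 < γp ∧ DenseInIcc T γm γp ∧
    r = ENNReal.ofReal (γp / γm)}

/-- sup of a set of reals, valued in `[0,∞]`. -/
def eSup (I : Set ℝ) : ENNReal := ⨆ x ∈ I, ENNReal.ofReal x

/-- inf of a set of reals, valued in `[0,∞]` (`= ∞` for `I = ∅`). -/
def eInf (I : Set ℝ) : ENNReal := ⨅ x ∈ I, ENNReal.ofReal x

lemma Tstar_pos {T : Set ℝ} (hT0 : T ⊆ Ioi 0) {x : ℝ} (hx : x ∈ Tstar T) : 0 < x := by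
  rcases hx with (h | ⟨y, hy, rfl⟩) | h
  · exact hT0 h
  · exact inv_pos.mpr (hT0 hy)
  · simp at h; simp [h]

theorem stmt4 (T : Set ℝ) (hT : T.Nonempty) (hT0 : T ⊆ Ioi 0) :
    (⨅ x ∈ Tstar T ∩ Ioi (1:ℝ), ENNReal.ofReal x) ≤ limitRatio T := by
  apply le_sInf
  rintro r ⟨γm, γp, hγm, hγp, hd, rfl⟩
  by_contra hcon
  rw [not_le] at hcon
  have hratio : 0 < γp / γm := div_pos (lt_trans one_pos hγp) hγm.1
  -- every element of Tstar larger than 1 exceeds γp/γm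
  have hkey : ∀ x ∈ Tstar T, 1 < x → γp / γm < x := by
    intro x hx hx1
    have hle : (⨅ y ∈ Tstar T ∩ Ioi (1:ℝ), ENNReal.ofReal y) ≤ ENNReal.ofReal x :=
      biInf_le _ ⟨hx, hx1⟩
    have := lt_of_lt_of_le hcon hle
    exact (ENNReal.ofReal_lt_ofReal_iff (lt_trans one_pos hx1)).mp this
  -- hence all elements of TProd are ≤ 1
  have hsub : TProd T γm γp ⊆ Iic 1 := by
    intro x hx
    simp only [TProd, mem_iUnion, mem_setOf_eq] at hx
    obtain ⟨n, _, t, ht, rfl, hp⟩ := hx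
    have hle1 : ∀ j, t j ≤ 1 := by
      by_contra hc
      push_neg at hc
      obtain ⟨j, hj⟩ := hc
      have hQ : γm ≤ ∏ i ∈ Finset.univ.filter (· < j), t i := by
        rcases Nat.eq_zero_or_pos j.val with hj0 | hj0
        · have : Finset.univ.filter (· < j) = (∅ : Finset (Fin n)) := by
            ext i
            simp [Fin.lt_def, hj0]
          rw [this]
          simpa using hγm.2.le
        · have hk : j.val - 1 < n := lt_of_le_of_lt (Nat.sub_le _ _) j.isLt
          have : Finset.univ.filter (· < j) = Finset.univ.filter (· ≤ (⟨j.val - 1, hk⟩ : Fin n)) := by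
            ext i
            simp only [Finset.mem_filter, Finset.mem_univ, true_and, Fin.lt_def, Fin.le_def]
            omega
          rw [this]
          exact (hp ⟨j.val - 1, hk⟩).1
      have hsplit : Finset.univ.filter (· ≤ j) = insert j (Finset.univ.filter (· < j)) := by
        ext i
        simp only [Finset.mem_filter, Finset.mem_univ, true_and, Finset.mem_insert]
        constructor
        · intro h; rcases eq_or_lt_of_le h with h | h
          · exact Or.inl h
          · exact Or.inr h
        · rintro (rfl | h); · exact le_refl _
          · exact le_of_lt h
      have hPj := hp j
      rw [hsplit, Finset.prod_insert (by simp)] at hPj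
      have h1 : γp < γm * t j := by
        have := (div_lt_iff₀ hγm.1).mp (hkey (t j) (ht j) hj)
        linarith [this]
      have h2 : γm * t j ≤ (∏ i ∈ Finset.univ.filter (· < j), t i) * t j := by
        apply mul_le_mul_of_nonneg_right hQ (le_of_lt (lt_trans one_pos hj))
      have := hPj.2
      rw [mul_comm] at this
      linarith
    calc ∏ i, t i ≤ ∏ i : Fin n, (1:ℝ) :=
          Finset.prod_le_prod (fun i _ => (Tstar_pos hT0 (ht i)).le) (fun i _ => hle1 i)
      _ = 1 := by simp
  -- but γp ∈ closure (TProd ...) ⊆ Iic 1, contradiction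
  have hγp_mem : γp ∈ Icc γm γp := right_mem_Icc.mpr (le_of_lt (lt_trans hγm.2 hγp))
  have : γp ∈ closure (TProd T γm γp) := hd hγp_mem
  have : γp ∈ Iic (1:ℝ) := by
    have hcl : closure (TProd T γm γp) ⊆ Iic 1 := by
      rw [← closure_Iic (1:ℝ)]
      exact closure_mono hsub
    exact hcl this
  simp only [mem_Iic] at this
  linarith
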